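/- Let n ≥ 3 be an integer and ε ∈ (0,1) with (1−ε)⁴ > (n−2)/n. Let D > 0 and let f : [0,D] → ℝ be twice continuously differentiable with f(0) = 0, f(D) = 0, f'(0) = 1, f'(D) = −1, and f(s) > 0 for all s ∈ (0,D). Suppose that for every s ∈ (0,D) one has (n−1)(n−2)·(1−f'(s)²)/f(s)² − 2(n−1)·f''(s)/f(s) ≥ n(n−1)(1−ε)², and that every s ∈ (0,D) with f'(s) = 0 satisfies f(s) ≥ 1−ε. Then there exists exactly one s₀ ∈ (0,D) with f'(s₀) = 0, and moreover f''(s₀) < 0. -/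
import Mathlib


/-- Uniqueness of the minimal leaf: near-extremal scalar curvature and MinA bounds force
the canonical sweepout of a rotationally symmetric `n`-sphere to contain exactly one
minimal hypersurface, which is unstable. -/
theorem unique_minimal_leaf (n : ℕ) (hn : 3 ≤ n) (ε : ℝ) (hε : ε ∈ Set.Ioo (0 : ℝ) 1)
    (hεn : ((n : ℝ) - 2) / (n : ℝ) < (1 - ε) ^ 4)
    (D : ℝ) (hD : 0 < D) (f f' f'' : ℝ → ℝ)
    (hderiv1 : ∀ s ∈ Set.Icc (0 : ℝ) D, HasDerivWithinAt f (f' s) (Set.Icc (0 : ℝ) D) s)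
    (hderiv2 : ∀ s ∈ Set.Icc (0 : ℝ) D, HasDerivWithinAt f' (f'' s) (Set.Icc (0 : ℝ) D) s)
    (hcont : ContinuousOn f'' (Set.Icc (0 : ℝ) D))
    (hf0 : f 0 = 0) (hfD : f D = 0) (hf'0 : f' 0 = 1) (hf'D : f' D = -1)
    (hpos : ∀ s ∈ Set.Ioo (0 : ℝ) D, 0 < f s)
    (hscal : ∀ s ∈ Set.Ioo (0 : ℝ) D,
      (n : ℝ) * ((n : ℝ) - 1) * (1 - ε) ^ 2 ≤
        ((n : ℝ) - 1) * ((n : ℝ) - 2) * (1 - (f' s) ^ 2) / (f s) ^ 2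
          - 2 * ((n : ℝ) - 1) * (f'' s) / (f s))
    (hminA : ∀ s ∈ Set.Ioo (0 : ℝ) D, f' s = 0 → 1 - ε ≤ f s) :
    ∃ s₀ ∈ Set.Ioo (0 : ℝ) D, f' s₀ = 0 ∧ f'' s₀ < 0 ∧
      ∀ s ∈ Set.Ioo (0 : ℝ) D, f' s = 0 → s = s₀ := by
  have hn3 : (3 : ℝ) ≤ (n : ℝ) := by exact_mod_cast hn
  have hε0 : 0 < ε := hε.1
  have hε1 : ε < 1 := hε.2
  have h1ε : 0 < 1 - ε := by linarith
  -- f' is continuous on [0, D]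
  have hf'cont : ContinuousOn f' (Set.Icc 0 D) := fun s hs =>
    (hderiv2 s hs).continuousWithinAt
  have hfcont : ContinuousOn f (Set.Icc 0 D) := fun s hs =>
    (hderiv1 s hs).continuousWithinAt
  -- derivatives at interior points
  have hdAt1 : ∀ s ∈ Set.Ioo (0 : ℝ) D, HasDerivAt f (f' s) s := fun s hs =>
    (hderiv1 s (Set.Ioo_subset_Icc_self hs)).hasDerivAt (Icc_mem_nhds hs.1 hs.2)
  have hdAt2 : ∀ s ∈ Set.Ioo (0 : ℝ) D, HasDerivAt f' (f'' s) s := fun s hs =>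
    (hderiv2 s (Set.Ioo_subset_Icc_self hs)).hasDerivAt (Icc_mem_nhds hs.1 hs.2)
  -- Lemma A: every critical point has f'' < 0
  have lemA : ∀ s ∈ Set.Ioo (0 : ℝ) D, f' s = 0 → f'' s < 0 := by
    intro s hs h0
    have hF : 0 < f s := hpos s hs
    have hFe : 1 - ε ≤ f s := hminA s hs h0
    have hsc := hscal s hs
    rw [h0] at hsc
    have hεn' : (n : ℝ) - 2 < (n : ℝ) * (1 - ε) ^ 4 := by
      rw [div_lt_iff₀ (by linarith : (0 : ℝ) < (n : ℝ))] at hεn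
      linarith
    have hF2 : (0 : ℝ) < (f s) ^ 2 := by positivity
    have key : (n : ℝ) * ((n : ℝ) - 1) * (1 - ε) ^ 2 * (f s) ^ 2 ≤
        ((n : ℝ) - 1) * ((n : ℝ) - 2) - 2 * ((n : ℝ) - 1) * (f'' s) * (f s) := by
      have h := mul_le_mul_of_nonneg_right hsc hF2.le
      have heq : (((n : ℝ) - 1) * ((n : ℝ) - 2) * (1 - (0 : ℝ) ^ 2) / (f s) ^ 2
          - 2 * ((n : ℝ) - 1) * (f'' s) / (f s)) * (f s) ^ 2 =
          ((n : ℝ) - 1) * ((n : ℝ) - 2) - 2 * ((n : ℝ) - 1) * (f'' s) * (f s) := by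
        field_simp
        ring
      rw [heq] at h
      exact h
    by_contra h
    push_neg at h
    have hsq : (1 - ε) ^ 2 ≤ (f s) ^ 2 := by nlinarith
    nlinarith [mul_le_mul_of_nonneg_left hsq
        (by nlinarith : (0 : ℝ) ≤ (n : ℝ) * ((n : ℝ) - 1) * (1 - ε) ^ 2),
      mul_nonneg (mul_nonneg (by linarith : (0 : ℝ) ≤ 2 * ((n : ℝ) - 1)) h) hF.le]
  -- local sign of f'' near a critical point
  have hnegnbhd : ∀ c ∈ Set.Ioo (0 : ℝ) D, f'' c < 0 →
      ∃ δ > 0, ∀ x, |x - c| < δ → x ∈ Set.Ioo (0 : ℝ) D ∧ f'' x < 0 := by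
    intro c hc hfc
    have hcA : ContinuousAt f'' c :=
      (hcont c (Set.Ioo_subset_Icc_self hc)).continuousAt (Icc_mem_nhds hc.1 hc.2)
    have h1 : ∀ᶠ x in nhds c, f'' x < 0 := hcA.eventually_lt_const hfc
    have h2 : ∀ᶠ x in nhds c, x ∈ Set.Ioo (0 : ℝ) D :=
      (isOpen_Ioo.mem_nhds hc)
    obtain ⟨δ, hδ, hball⟩ := Metric.eventually_nhds_iff.mp (h1.and h2)
    exact ⟨δ, hδ, fun x hx => ⟨(hball (by simpa [Real.dist_eq] using hx)).2,
      (hball (by simpa [Real.dist_eq] using hx)).1⟩⟩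
  -- right decrease: just right of a critical point, f drops below f c
  have right_dec : ∀ c ∈ Set.Ioo (0 : ℝ) D, f' c = 0 → ∀ u, c < u → u ≤ D →
      ∃ t ∈ Set.Ioo c u, f t < f c := by
    intro c hc h0 u hcu huD
    obtain ⟨δ, hδ, hball⟩ := hnegnbhd c hc (lemA c hc h0)
    set u' : ℝ := min (c + δ / 2) ((c + u) / 2) with hu'
    have hcu' : c < u' := by
      apply lt_min <;> [linarith; linarith]
    have hu'u : u' < u := by
      have : (c + u) / 2 < u := by linarith
      exact lt_of_le_of_lt (min_le_right _ _) this
    have hsub : ∀ x ∈ Set.Icc c u', |x - c| < δ := by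
      intro x hx
      have h1 : x ≤ c + δ / 2 := hx.2.trans (min_le_left _ _)
      rw [abs_lt]; constructor <;> [linarith [hx.1]; linarith]
    -- f' is strictly antitone on [c, u']
    have hanti : StrictAntiOn f' (Set.Icc c u') := by
      apply strictAntiOn_of_deriv_neg (convex_Icc c u')
      · exact hf'cont.mono fun x hx => ⟨(hball x (hsub x hx)).1.1.le,
          (hball x (hsub x hx)).1.2.le⟩
      · intro x hx
        rw [interior_Icc] at hx
        have hx' := hball x (hsub x (Set.Ioo_subset_Icc_self hx))
        rw [(hdAt2 x hx'.1).deriv]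
        exact hx'.2
    have hf'neg : ∀ x ∈ Set.Ioc c u', f' x < 0 := by
      intro x hx
      have := hanti (Set.left_mem_Icc.mpr (le_of_lt hcu'))
        ⟨hx.1.le, hx.2⟩ hx.1
      rwa [h0] at this
    -- f is strictly antitone on [c, u']
    have hfanti : StrictAntiOn f (Set.Icc c u') := by
      apply strictAntiOn_of_deriv_neg (convex_Icc c u')
      · exact hfcont.mono fun x hx => ⟨(hball x (hsub x hx)).1.1.le,
          (hball x (hsub x hx)).1.2.le⟩
      · intro x hx
        rw [interior_Icc] at hx
        have hx' := hball x (hsub x (Set.Ioo_subset_Icc_self hx))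
        rw [(hdAt1 x hx'.1).deriv]
        exact hf'neg x ⟨hx.1, hx.2.le⟩
    exact ⟨u', ⟨hcu', hu'u⟩, hfanti (Set.left_mem_Icc.mpr hcu'.le)
      (Set.right_mem_Icc.mpr hcu'.le) hcu'⟩
  -- left increase: just left of a critical point, f drops below f c
  have left_inc : ∀ c ∈ Set.Ioo (0 : ℝ) D, f' c = 0 → ∀ u, 0 ≤ u → u < c →
      ∃ t ∈ Set.Ioo u c, f t < f c := by
    intro c hc h0 u hu0 huc
    obtain ⟨δ, hδ, hball⟩ := hnegnbhd c hc (lemA c hc h0)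
    set u' : ℝ := max (c - δ / 2) ((c + u) / 2) with hu'
    have hcu' : u' < c := by
      apply max_lt <;> [linarith; linarith]
    have hu'u : u < u' := by
      have : u < (c + u) / 2 := by linarith
      exact lt_of_lt_of_le this (le_max_right _ _)
    have hsub : ∀ x ∈ Set.Icc u' c, |x - c| < δ := by
      intro x hx
      have h1 : c - δ / 2 ≤ x := (le_max_left _ _).trans hx.1
      rw [abs_lt]; constructor <;> [linarith; linarith [hx.2]]
    have hanti : StrictAntiOn f' (Set.Icc u' c) := by
      apply strictAntiOn_of_deriv_neg (convex_Icc u' c)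
      · exact hf'cont.mono fun x hx => ⟨(hball x (hsub x hx)).1.1.le,
          (hball x (hsub x hx)).1.2.le⟩
      · intro x hx
        rw [interior_Icc] at hx
        have hx' := hball x (hsub x (Set.Ioo_subset_Icc_self hx))
        rw [(hdAt2 x hx'.1).deriv]
        exact hx'.2
    have hf'pos : ∀ x ∈ Set.Ico u' c, 0 < f' x := by
      intro x hx
      have := hanti ⟨hx.1, hx.2.le⟩ (Set.right_mem_Icc.mpr (le_of_lt hcu')) hx.2
      rwa [h0] at this
    have hfmono : StrictMonoOn f (Set.Icc u' c) := by
      apply strictMonoOn_of_deriv_pos (convex_Icc u' c)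
      · exact hfcont.mono fun x hx => ⟨(hball x (hsub x hx)).1.1.le,
          (hball x (hsub x hx)).1.2.le⟩
      · intro x hx
        rw [interior_Icc] at hx
        have hx' := hball x (hsub x (Set.Ioo_subset_Icc_self hx))
        rw [(hdAt1 x hx'.1).deriv]
        exact hf'pos x ⟨hx.1.le, hx.2⟩
    exact ⟨u', ⟨hu'u, hcu'⟩, hfmono (Set.left_mem_Icc.mpr hcu'.le)
      (Set.right_mem_Icc.mpr hcu'.le) hcu'⟩
  -- no two critical points
  have no_two : ∀ s₁ s₂, s₁ ∈ Set.Ioo (0 : ℝ) D → s₂ ∈ Set.Ioo (0 : ℝ) D →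
      f' s₁ = 0 → f' s₂ = 0 → s₁ < s₂ → False := by
    intro s₁ s₂ hs₁ hs₂ h₁ h₂ h12
    obtain ⟨a, ha, hfa⟩ := right_dec s₁ hs₁ h₁ s₂ h12 hs₂.2.le
    obtain ⟨b, hb, hfb⟩ := left_inc s₂ hs₂ h₂ s₁ hs₁.1.le h12
    -- min of f on [s₁, s₂]
    obtain ⟨c, hcmem, hcmin⟩ := isCompact_Icc.exists_isMinOn
      (Set.nonempty_Icc.mpr h12.le)
      (hfcont.mono (Set.Icc_subset_Icc hs₁.1.le hs₂.2.le))
    have hmin := isMinOn_iff.mp hcmin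
    have hca : f c ≤ f a := hmin a (Set.Ioo_subset_Icc_self ha)
    have hcb : f c ≤ f b := hmin b (Set.Ioo_subset_Icc_self hb)
    have hc1 : s₁ < c := by
      rcases eq_or_lt_of_le hcmem.1 with h | h
      · exfalso; rw [h] at hfa; linarith
      · exact h
    have hc2 : c < s₂ := by
      rcases eq_or_lt_of_le hcmem.2 with h | h
      · exfalso; rw [← h] at hfb; linarith
      · exact h
    have hcIoo : c ∈ Set.Ioo (0 : ℝ) D := ⟨hs₁.1.trans hc1, hc2.trans hs₂.2⟩
    have hlocmin : IsLocalMin f c := hcmin.isLocalMin (Icc_mem_nhds hc1 hc2)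
    have hf'c : f' c = 0 := hlocmin.hasDerivAt_eq_zero (hdAt1 c hcIoo)
    obtain ⟨t, ht, hft⟩ := right_dec c hcIoo hf'c s₂ hc2 hs₂.2.le
    have : f c ≤ f t := hmin t ⟨hc1.le.trans ht.1.le, ht.2.le⟩
    linarith
  -- existence via IVT
  have h0mem : (0 : ℝ) ∈ Set.Icc (f' D) (f' 0) := by
    rw [hf'0, hf'D]; constructor <;> norm_num
  obtain ⟨s₀, hs₀Icc, hs₀⟩ := intermediate_value_Icc' hD.le hf'cont h0mem
  have hs₀Ioo : s₀ ∈ Set.Ioo (0 : ℝ) D := by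
    rcases eq_or_lt_of_le hs₀Icc.1 with h | h
    · exfalso; rw [← h] at hs₀; rw [hf'0] at hs₀; norm_num at hs₀
    rcases eq_or_lt_of_le hs₀Icc.2 with h' | h'
    · exfalso; rw [h'] at hs₀; rw [hf'D] at hs₀; norm_num at hs₀
    exact ⟨h, h'⟩
  refine ⟨s₀, hs₀Ioo, hs₀, lemA s₀ hs₀Ioo hs₀, ?_⟩
  intro s hs hz
  by_contra hne
  rcases lt_or_gt_of_ne hne with h | h
  · exact no_two s s₀ hs hs₀Ioo hz hs₀ h
  · exact no_two s₀ s hs₀Ioo hs hs₀ hz h
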